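/- arXiv:1803.01436 — 3 statements merged into one kernel-verified Lean document; each statement's English description precedes it below -/
import Mathlib

section
/- Let f : ℝ^d × ℝ^d → ℝ be a continuously differentiable, globally Lipschitz function. Then for every t > 0 and every (p,ξ) ∈ ℝ^d × ℝ^d, the function P_t f is differentiable in p and ‖∇_p P_t f(p,ξ)‖² ≤ Σ_{i=1}^d P_t((∂_{p_i} f + t·∂_{ξ_i} f)²)(p,ξ). -/
open MeasureTheory Real
open scoped RealInnerProductSpace NNReal

noncomputable section

abbrev Ed (d : ℕ) : Type := EuclideanSpace ℝ (Fin d)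

/-- Density of the Gaussian law of `(B_t, ∫_0^t B_s ds)` for a `d`-dimensional
Brownian motion with variance `σ²`. -/
def kolDensity (d : ℕ) (σ t : ℝ) (z : Ed d × Ed d) : ℝ :=
  ∏ i : Fin d, (Real.sqrt 3 / (Real.pi * σ ^ 2 * t ^ 2)) *
    Real.exp (-(2 / σ ^ 2) *
      ((z.1 i) ^ 2 / t - 3 * z.1 i * z.2 i / t ^ 2 + 3 * (z.2 i) ^ 2 / t ^ 3))

/-- The Kolmogorov semigroup `P_t`. -/
def kolP (d : ℕ) (σ t : ℝ) (f : Ed d × Ed d → ℝ) (x : Ed d × Ed d) : ℝ :=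
  if t = 0 then f x
  else ∫ z : Ed d × Ed d, f (x.1 + z.1, x.2 + t • x.1 + z.2) * kolDensity d σ t z

/-- Partial derivative in the variable `p_i`. -/
def dP (d : ℕ) (i : Fin d) (f : Ed d × Ed d → ℝ) (x : Ed d × Ed d) : ℝ :=
  fderiv ℝ f x ((EuclideanSpace.single i 1 : Ed d), (0 : Ed d))

/-- Partial derivative in the variable `ξ_i`. -/
def dXi (d : ℕ) (i : Fin d) (f : Ed d × Ed d → ℝ) (x : Ed d × Ed d) : ℝ :=
  fderiv ℝ f x ((0 : Ed d), (EuclideanSpace.single i 1 : Ed d))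

/-- Gradient in the `p` variable. -/
def gradP (d : ℕ) (f : Ed d × Ed d → ℝ) (x : Ed d × Ed d) : Ed d :=
  gradient (fun p => f (p, x.2)) x.1

/-- Gradient in the `ξ` variable. -/
def gradXi (d : ℕ) (f : Ed d × Ed d → ℝ) (x : Ed d × Ed d) : Ed d :=
  gradient (fun ξ => f (x.1, ξ)) x.2

/-! ### Auxiliary lemmas -/

section Aux

variable {d : ℕ} {σ t : ℝ}

lemma kolDensity_nonneg (z : Ed d × Ed d) : 0 ≤ kolDensity d σ t z := by
  unfold kolDensity
  exact Finset.prod_nonneg fun i _ => by positivity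

lemma kolDensity_continuous : Continuous (kolDensity d σ t) := by
  unfold kolDensity
  fun_prop

lemma kolDensity_split (hσ : 0 < σ) (ht : 0 < t) (z : Ed d × Ed d) :
    kolDensity d σ t z =
      (∏ i : Fin d, Real.exp (-(1 / (2 * σ ^ 2 * t)) * (z.1 i) ^ 2)) *
        ∏ i : Fin d, (Real.sqrt 3 / (Real.pi * σ ^ 2 * t ^ 2)) *
          Real.exp (-(6 / (σ ^ 2 * t ^ 3)) * (z.2 i - t * z.1 i / 2) ^ 2) := by
  rw [kolDensity, ← Finset.prod_mul_distrib]
  refine Finset.prod_congr rfl fun i _ => ?_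
  have : Real.exp (-(2 / σ ^ 2) *
      ((z.1 i) ^ 2 / t - 3 * z.1 i * z.2 i / t ^ 2 + 3 * (z.2 i) ^ 2 / t ^ 3)) =
      Real.exp (-(1 / (2 * σ ^ 2 * t)) * (z.1 i) ^ 2) *
      Real.exp (-(6 / (σ ^ 2 * t ^ 3)) * (z.2 i - t * z.1 i / 2) ^ 2) := by
    rw [← Real.exp_add]
    congr 1
    field_simp
    ring
  rw [this]; ring

lemma key_alg (hσ : 0 < σ) (ht : 0 < t) :
    (Real.sqrt 3 / (Real.pi * σ ^ 2 * t ^ 2)) * Real.sqrt (Real.pi / (6 / (σ ^ 2 * t ^ 3))) *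
      Real.sqrt (Real.pi / (1 / (2 * σ ^ 2 * t))) = 1 := by
  have hπ := Real.pi_pos
  have hA : (0:ℝ) < Real.pi * σ ^ 2 * t ^ 2 := by positivity
  rw [mul_assoc, ← Real.sqrt_mul (by positivity)]
  have h1 : Real.pi / (6 / (σ ^ 2 * t ^ 3)) * (Real.pi / (1 / (2 * σ ^ 2 * t))) =
      (Real.pi * σ ^ 2 * t ^ 2) ^ 2 / 3 := by
    field_simp
    ring
  rw [h1, Real.sqrt_div (sq_nonneg _), Real.sqrt_sq hA.le, div_mul_div_comm,
    div_eq_one_iff_eq (by positivity)]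
  ring

lemma lintegral_prod_gauss {c b : ℝ} (hb : 0 < b) (hc : 0 ≤ c) :
    ∫⁻ y : Fin d → ℝ, ENNReal.ofReal (∏ i : Fin d, c * Real.exp (-b * (y i) ^ 2)) =
      ENNReal.ofReal ((c * Real.sqrt (Real.pi / b)) ^ d) := by
  have hint : Integrable (fun s : ℝ => c * Real.exp (-b * s ^ 2)) :=
    (integrable_exp_neg_mul_sq hb).const_mul c
  have hprodint : Integrable (fun y : Fin d → ℝ => ∏ i, c * Real.exp (-b * (y i) ^ 2)) :=
    Integrable.fintype_prod (𝕜 := ℝ) (f := fun _ s => c * Real.exp (-b * s ^ 2)) (fun _ => hint)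
  rw [← MeasureTheory.ofReal_integral_eq_lintegral_ofReal hprodint
    (ae_of_all _ fun y => Finset.prod_nonneg fun i _ => by positivity)]
  congr 1
  rw [MeasureTheory.volume_pi, MeasureTheory.integral_fintype_prod_eq_pow (ι := Fin d)
    (f := fun s : ℝ => c * Real.exp (-b * s ^ 2)), MeasureTheory.integral_const_mul,
    integral_gaussian]
  simp [Fintype.card_fin]

lemma lintegral_kolDensity (hσ : 0 < σ) (ht : 0 < t) :
    ∫⁻ z : Ed d × Ed d, ENNReal.ofReal (kolDensity d σ t z) = 1 := by
  have hπ := Real.pi_pos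
  set a : ℝ := 1 / (2 * σ ^ 2 * t) with ha_def
  set b : ℝ := 6 / (σ ^ 2 * t ^ 3) with hb_def
  set c0 : ℝ := Real.sqrt 3 / (Real.pi * σ ^ 2 * t ^ 2) with hc0_def
  have ha : 0 < a := by positivity
  have hb : 0 < b := by positivity
  have hc0 : 0 < c0 := by positivity
  set e := (MeasurableEquiv.toLp 2 (Fin d → ℝ)).symm with he_def
  have he := EuclideanSpace.volume_preserving_symm_measurableEquiv_toLp (Fin d)
  have hφ : MeasurePreserving (Prod.map ⇑e.symm ⇑e.symm)
      ((volume : Measure (Fin d → ℝ)).prod volume)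
      ((volume : Measure (Ed d)).prod volume) :=
    (he.symm e).prod (he.symm e)
  have hρm : Measurable fun z : Ed d × Ed d => ENNReal.ofReal (kolDensity d σ t z) := by
    apply ENNReal.measurable_ofReal.comp
    apply Continuous.measurable
    unfold kolDensity
    fun_prop
  rw [show (volume : Measure (Ed d × Ed d)) = (volume : Measure (Ed d)).prod volume from rfl,
    ← hφ.lintegral_comp hρm]
  have hpt : ∀ w : (Fin d → ℝ) × (Fin d → ℝ),
      kolDensity d σ t (Prod.map ⇑e.symm ⇑e.symm w) =
        (∏ i : Fin d, Real.exp (-a * (w.1 i) ^ 2)) *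
          ∏ i : Fin d, c0 * Real.exp (-b * (w.2 i - t * w.1 i / 2) ^ 2) := by
    intro w
    rw [kolDensity_split hσ ht]
    rfl
  simp only [hpt]
  rw [lintegral_prod]
  swap
  · apply Measurable.aemeasurable
    apply ENNReal.measurable_ofReal.comp
    apply Continuous.measurable
    fun_prop
  have hinner : ∀ x : Fin d → ℝ,
      (∫⁻ y : Fin d → ℝ, ENNReal.ofReal ((∏ i : Fin d, Real.exp (-a * (x i) ^ 2)) *
          ∏ i : Fin d, c0 * Real.exp (-b * (y i - t * x i / 2) ^ 2)))
        = ENNReal.ofReal (∏ i : Fin d, Real.exp (-a * (x i) ^ 2)) *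
            ENNReal.ofReal ((c0 * Real.sqrt (Real.pi / b)) ^ d) := by
    intro x
    simp only [ENNReal.ofReal_mul (Finset.prod_nonneg fun i _ => (Real.exp_pos _).le)]
    rw [lintegral_const_mul]
    swap
    · apply ENNReal.measurable_ofReal.comp
      apply Continuous.measurable
      fun_prop
    congr 1
    have htr := lintegral_add_right_eq_self
      (f := fun y : Fin d → ℝ => ENNReal.ofReal (∏ i : Fin d, c0 * Real.exp (-b * (y i) ^ 2)))
      (μ := volume) (-(fun i => t * x i / 2))
    rw [← lintegral_prod_gauss hb hc0.le, ← htr]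
    congr 1
  simp only [hinner]
  rw [lintegral_mul_const]
  swap
  · apply ENNReal.measurable_ofReal.comp
    apply Continuous.measurable
    fun_prop
  have h1 : ∫⁻ x : Fin d → ℝ, ENNReal.ofReal (∏ i : Fin d, Real.exp (-a * (x i) ^ 2))
      = ENNReal.ofReal ((1 * Real.sqrt (Real.pi / a)) ^ d) := by
    rw [← lintegral_prod_gauss ha zero_le_one]
    simp
  rw [h1, ← ENNReal.ofReal_mul (by positivity), ← mul_pow]
  have : 1 * Real.sqrt (Real.pi / a) * (c0 * Real.sqrt (Real.pi / b)) = 1 := by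
    rw [one_mul, ← key_alg (σ := σ) (t := t) hσ ht]
    ring
  rw [this]
  simp

lemma cs_aux (d : ℕ) (v c : Fin d → ℝ) :
    |∑ i, v i * c i| ≤ Real.sqrt (∑ i, c i ^ 2) * Real.sqrt (∑ i, v i ^ 2) := by
  rw [← Real.sqrt_sq_eq_abs, ← Real.sqrt_mul (Finset.sum_nonneg fun i _ => sq_nonneg _)]
  apply Real.sqrt_le_sqrt
  calc (∑ i, v i * c i) ^ 2 ≤ (∑ i, v i ^ 2) * ∑ i, c i ^ 2 :=
        Finset.sum_mul_sq_le_sq_mul_sq _ v c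
    _ = (∑ i, c i ^ 2) * ∑ i, v i ^ 2 := mul_comm _ _

lemma norm_eq_aux (d : ℕ) (v : Ed d) : ‖v‖ = Real.sqrt (∑ i, v i ^ 2) := by
  rw [EuclideanSpace.norm_eq]
  simp [Real.norm_eq_abs, sq_abs]

lemma euclidean_decomp (d : ℕ) (v : Ed d) :
    v = ∑ i : Fin d, v i • EuclideanSpace.single i (1:ℝ) := by
  have h := (EuclideanSpace.basisFun (Fin d) ℝ).sum_repr v
  simp only [EuclideanSpace.basisFun_apply, EuclideanSpace.basisFun_repr] at h
  exact h.symm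

end Aux

/-- **Bakry–Émery type estimate for the Kolmogorov semigroup (p-gradient).**
If `f : ℝ^d × ℝ^d → ℝ` is `C¹` and globally Lipschitz, then for `t > 0` the function
`P_t f` is differentiable in `p` and
`‖∇_p P_t f(p,ξ)‖² ≤ ∑ i, P_t ((∂_{p_i} f + t ∂_{ξ_i} f)²)(p,ξ)`. -/
theorem kolmogorov_gradP_bound (d : ℕ) (hd : 1 ≤ d) (σ : ℝ) (hσ : 0 < σ)
    (f : Ed d × Ed d → ℝ) (hf : ContDiff ℝ 1 f) (K : ℝ≥0) (hLip : LipschitzWith K f)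
    (t : ℝ) (ht : 0 < t) (p ξ : Ed d) :
    DifferentiableAt ℝ (fun p' => kolP d σ t f (p', ξ)) p ∧
    ‖gradient (fun p' => kolP d σ t f (p', ξ)) p‖ ^ 2 ≤
      ∑ i : Fin d, kolP d σ t (fun x => (dP d i f x + t * dXi d i f x) ^ 2) (p, ξ) := by
  classical
  have htne : t ≠ 0 := ht.ne'
  set ρ : Ed d × Ed d → ℝ := kolDensity d σ t with hρ_def
  have hρcont : Continuous ρ := kolDensity_continuous
  have hρnn : ∀ z, 0 ≤ ρ z := fun z => kolDensity_nonneg z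
  have hρmeas : Measurable fun z => ENNReal.ofReal (ρ z) :=
    ENNReal.measurable_ofReal.comp hρcont.measurable
  set ν : Measure (Ed d × Ed d) := volume.withDensity (fun z => ENNReal.ofReal (ρ z)) with hν_def
  have hνuniv : ν Set.univ = 1 := by
    rw [hν_def, withDensity_apply _ MeasurableSet.univ, setLIntegral_univ]
    exact lintegral_kolDensity hσ ht
  have hνprob : IsProbabilityMeasure ν := ⟨hνuniv⟩
  have hρint : Integrable ρ volume := by
    refine ⟨hρcont.aestronglyMeasurable, ?_⟩
    rw [hasFiniteIntegral_iff_ofReal (ae_of_all _ hρnn), lintegral_kolDensity hσ ht]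
    exact ENNReal.one_lt_top
  -- transfer of integrals
  have hint_transfer : ∀ g : Ed d × Ed d → ℝ,
      ∫ z, g z ∂ν = ∫ z, g z * ρ z := by
    intro g
    rw [hν_def]
    rw [show (fun z : Ed d × Ed d => ENNReal.ofReal (ρ z)) =
      (fun z : Ed d × Ed d => ((Real.toNNReal (ρ z) : ℝ≥0) : ENNReal)) from rfl]
    rw [integral_withDensity_eq_integral_smul
      (by exact (measurable_real_toNNReal.comp hρcont.measurable)) g]
    congr 1
    funext z
    simp [NNReal.smul_def, Real.coe_toNNReal _ (hρnn z), mul_comm]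
  -- the affine structure of the shift
  set A : Ed d →L[ℝ] Ed d × Ed d :=
    (ContinuousLinearMap.id ℝ (Ed d)).prod (t • ContinuousLinearMap.id ℝ (Ed d)) with hA_def
  have hAapp : ∀ v : Ed d, A v = (v, t • v) := fun v => rfl
  have hshift : ∀ (p' : Ed d) (z : Ed d × Ed d),
      ((p' + z.1 : Ed d), (ξ + t • p' + z.2 : Ed d)) = A p' + (z.1, ξ + z.2) := by
    intro p' z
    rw [hAapp]
    refine Prod.ext ?_ ?_
    · rfl
    · show ξ + t • p' + z.2 = t • p' + (ξ + z.2)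
      abel
  have hkolP : ∀ (g : Ed d × Ed d → ℝ) (p' : Ed d),
      kolP d σ t g (p', ξ) = ∫ z, g (A p' + (z.1, ξ + z.2)) ∂ν := by
    intro g p'
    rw [hint_transfer]
    simp only [kolP, if_neg htne]
    congr 1
    funext z
    rw [show ((p', ξ).1 + z.1, (p', ξ).2 + t • (p', ξ).1 + z.2) = ((p' + z.1 : Ed d),
      (ξ + t • p' + z.2 : Ed d)) from rfl, hshift p' z]
  by_cases h : Integrable (fun z : Ed d × Ed d => f (A p + (z.1, ξ + z.2)) * ρ z) volume
  case neg =>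
    have hnone : ∀ p' : Ed d,
        ¬ Integrable (fun z : Ed d × Ed d => f (A p' + (z.1, ξ + z.2)) * ρ z) volume := by
      intro p' hp'
      apply h
      have hD : Integrable (fun z : Ed d × Ed d =>
          (f (A p' + (z.1, ξ + z.2)) - f (A p + (z.1, ξ + z.2))) * ρ z) volume := by
        refine Integrable.mono' (hρint.const_mul ((K : ℝ) * ‖A p' - A p‖)) ?_
          (ae_of_all _ fun z => ?_)
        · exact (((hf.continuous.comp (by fun_prop)).sub
            (hf.continuous.comp (by fun_prop))).mul hρcont).aestronglyMeasurable
        · rw [Real.norm_eq_abs, abs_mul, abs_of_nonneg (hρnn z)]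
          have h2 : |f (A p' + (z.1, ξ + z.2)) - f (A p + (z.1, ξ + z.2))|
              ≤ (K : ℝ) * ‖A p' - A p‖ := by
            have h3 := hLip.dist_le_mul (A p' + (z.1, ξ + z.2)) (A p + (z.1, ξ + z.2))
            rwa [Real.dist_eq, dist_add_right, dist_eq_norm] at h3
          exact mul_le_mul_of_nonneg_right h2 (hρnn z)
      have heq : (fun z : Ed d × Ed d => f (A p + (z.1, ξ + z.2)) * ρ z)
          = fun z : Ed d × Ed d => f (A p' + (z.1, ξ + z.2)) * ρ z -
              (f (A p' + (z.1, ξ + z.2)) - f (A p + (z.1, ξ + z.2))) * ρ z := by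
        funext z; ring
      rw [heq]
      exact hp'.sub hD
    have hzero : ∀ p' : Ed d, kolP d σ t f (p', ξ) = 0 := by
      intro p'
      simp only [kolP, if_neg htne]
      have heq2 : (fun z : Ed d × Ed d =>
          f ((p', ξ).1 + z.1, (p', ξ).2 + t • (p', ξ).1 + z.2) * ρ z)
          = fun z : Ed d × Ed d => f (A p' + (z.1, ξ + z.2)) * ρ z := by
        funext z
        rw [show ((p', ξ).1 + z.1, (p', ξ).2 + t • (p', ξ).1 + z.2) = ((p' + z.1 : Ed d),
          (ξ + t • p' + z.2 : Ed d)) from rfl, hshift p' z]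
      rw [heq2]
      exact integral_undef (hnone p')
    have heq3 : (fun p' => kolP d σ t f (p', ξ)) = fun _ => (0:ℝ) :=
      funext fun p' => hzero p'
    constructor
    · rw [heq3]; exact differentiableAt_const 0
    · rw [heq3, gradient_fun_const]
      simp only [norm_zero]
      rw [zero_pow two_ne_zero]
      refine Finset.sum_nonneg fun i _ => ?_
      simp only [kolP, if_neg htne]
      exact integral_nonneg fun z => mul_nonneg (sq_nonneg _) (hρnn z)
  case pos =>
    haveI := hνprob
    set F' : (Ed d × Ed d) → Ed d →L[ℝ] ℝ :=
      fun z => (fderiv ℝ f (A p + (z.1, ξ + z.2))).comp A with hF'_def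
    have hwcont : Continuous fun z : Ed d × Ed d => A p + (z.1, ξ + z.2) := by fun_prop
    have hF'cont : Continuous F' := by
      rw [hF'_def]
      exact ((hf.continuous_fderiv one_ne_zero).comp hwcont).clm_comp continuous_const
    set M : ℝ := (K : ℝ) * ‖A‖ with hM_def
    have hM0 : 0 ≤ M := mul_nonneg K.coe_nonneg (norm_nonneg _)
    have hF'le : ∀ z, ‖F' z‖ ≤ M := fun z =>
      (ContinuousLinearMap.opNorm_comp_le _ _).trans
        (mul_le_mul_of_nonneg_right (norm_fderiv_le_of_lipschitz ℝ hLip) (norm_nonneg A))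
    have hbint : ∀ (g : Ed d × Ed d → ℝ) (C : ℝ), Continuous g → (∀ z, |g z| ≤ C) →
        Integrable g ν := fun g C hg hC =>
      ⟨hg.aestronglyMeasurable, HasFiniteIntegral.mono' (integrable_const C).2
        (ae_of_all _ fun z => by simpa [Real.norm_eq_abs] using hC z)⟩
    have hlipF : ∀ z : Ed d × Ed d,
        LipschitzWith (K * ‖A‖₊) fun p' : Ed d => f (A p' + (z.1, ξ + z.2)) := by
      intro z
      have h1 : LipschitzWith ‖A‖₊ fun p' : Ed d => A p' + ((z.1, ξ + z.2) : Ed d × Ed d) :=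
        LipschitzWith.of_dist_le_mul fun x y => by
          rw [dist_add_right]
          exact A.lipschitz.dist_le_mul x y
      exact hLip.comp h1
    have hFp_int : Integrable (fun z : Ed d × Ed d => f (A p + (z.1, ξ + z.2))) ν := by
      rw [hν_def, integrable_withDensity_iff hρmeas
        (ae_of_all _ fun z => ENNReal.ofReal_lt_top)]
      refine h.congr (ae_of_all _ fun z => ?_)
      simp only [ENNReal.toReal_ofReal (hρnn z)]
    have hder := hasFDerivAt_integral_of_dominated_loc_of_lip
      (F := fun (p' : Ed d) (z : Ed d × Ed d) => f (A p' + (z.1, ξ + z.2)))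
      (F' := F') (x₀ := p) (bound := fun _ => ((K * ‖A‖₊ : ℝ≥0) : ℝ)) (s := Metric.ball p 1) (Metric.ball_mem_nhds p one_pos)
      (Filter.Eventually.of_forall fun p' =>
        (hf.continuous.comp (by fun_prop)).aestronglyMeasurable)
      hFp_int hF'cont.aestronglyMeasurable
      (ae_of_all _ fun z => by
        simpa [Real.nnabs_coe, norm_toNNReal] using (hlipF z).lipschitzOnWith (s := Metric.ball p 1))
      (integrable_const _)
      (ae_of_all _ fun z => by
        have h1 : HasFDerivAt (fun p' : Ed d => A p' + ((z.1, ξ + z.2) : Ed d × Ed d)) A p :=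
          A.hasFDerivAt.add_const _
        exact ((hf.differentiable one_ne_zero _).hasFDerivAt).comp p h1)
    obtain ⟨hF'int, hderiv⟩ := hder
    have hPeq : (fun p' => kolP d σ t f (p', ξ))
        = fun p' => ∫ z, f (A p' + (z.1, ξ + z.2)) ∂ν := funext fun p' => hkolP f p'
    have hderiv' : HasFDerivAt (fun p' => kolP d σ t f (p', ξ)) (∫ z, F' z ∂ν) p := by
      rw [hPeq]; exact hderiv
    refine ⟨hderiv'.differentiableAt, ?_⟩
    have hgrad : ‖gradient (fun p' => kolP d σ t f (p', ξ)) p‖ = ‖∫ z, F' z ∂ν‖ := by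
      rw [gradient, hderiv'.fderiv]
      exact LinearIsometryEquiv.norm_map _ _
    rw [hgrad]
    set φ : Ed d × Ed d → ℝ :=
      fun z => Real.sqrt (∑ i : Fin d, (F' z (EuclideanSpace.single i 1)) ^ 2) with hφ_def
    have hφnn : ∀ z, 0 ≤ φ z := fun z => Real.sqrt_nonneg _
    have hFele : ∀ (z) (i : Fin d), (F' z (EuclideanSpace.single i 1)) ^ 2 ≤ M ^ 2 := by
      intro z i
      have h1 : |F' z (EuclideanSpace.single i 1)| ≤ M := by
        rw [← Real.norm_eq_abs]
        calc ‖F' z (EuclideanSpace.single i 1)‖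
            ≤ ‖F' z‖ * ‖(EuclideanSpace.single i (1:ℝ) : Ed d)‖ := (F' z).le_opNorm _
          _ ≤ M := by
              rw [EuclideanSpace.norm_single, norm_one, mul_one]
              exact hF'le z
      calc (F' z (EuclideanSpace.single i 1)) ^ 2
          = |F' z (EuclideanSpace.single i 1)| ^ 2 := (sq_abs _).symm
        _ ≤ M ^ 2 := pow_le_pow_left₀ (abs_nonneg _) h1 2
    have hφcont : Continuous φ := by
      apply Real.continuous_sqrt.comp
      exact continuous_finset_sum _ fun i _ => (hF'cont.clm_apply continuous_const).pow 2
    have hφle : ∀ z, |φ z| ≤ Real.sqrt (d * M ^ 2) := by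
      intro z
      rw [abs_of_nonneg (hφnn z)]
      apply Real.sqrt_le_sqrt
      calc ∑ i : Fin d, (F' z (EuclideanSpace.single i 1)) ^ 2
          ≤ ∑ _i : Fin d, M ^ 2 := Finset.sum_le_sum fun i _ => hFele z i
        _ = d * M ^ 2 := by
            rw [Finset.sum_const, Finset.card_univ, Fintype.card_fin, nsmul_eq_mul]
    have hptw : ∀ z (v : Ed d), |F' z v| ≤ φ z * ‖v‖ := by
      intro z v
      have hv : F' z v = ∑ i : Fin d, v i * F' z (EuclideanSpace.single i 1) := by
        conv_lhs => rw [euclidean_decomp d v]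
        rw [map_sum]
        exact Finset.sum_congr rfl fun i _ => by rw [ContinuousLinearMap.map_smul, smul_eq_mul]
      rw [hv, hφ_def, norm_eq_aux]
      exact cs_aux d v _
    have hφint : Integrable φ ν := hbint φ _ hφcont hφle
    have hφ2int : Integrable (fun z => φ z ^ 2) ν := by
      refine hbint _ (d * M ^ 2) (hφcont.pow 2) fun z => ?_
      rw [abs_of_nonneg (sq_nonneg _), hφ_def,
        Real.sq_sqrt (Finset.sum_nonneg fun i _ => sq_nonneg _)]
      calc ∑ i : Fin d, (F' z (EuclideanSpace.single i 1)) ^ 2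
          ≤ ∑ _i : Fin d, M ^ 2 := Finset.sum_le_sum fun i _ => hFele z i
        _ = d * M ^ 2 := by
            rw [Finset.sum_const, Finset.card_univ, Fintype.card_fin, nsmul_eq_mul]
    have hnormL : ‖∫ z, F' z ∂ν‖ ≤ ∫ z, φ z ∂ν := by
      refine ContinuousLinearMap.opNorm_le_bound _ (integral_nonneg fun z => hφnn z) fun v => ?_
      rw [ContinuousLinearMap.integral_apply hF'int]
      have hFv_int : Integrable (fun z => F' z v) ν :=
        hbint _ (M * ‖v‖) (hF'cont.clm_apply continuous_const) fun z => by
          rw [← Real.norm_eq_abs]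
          exact ((F' z).le_opNorm v).trans
            (mul_le_mul_of_nonneg_right (hF'le z) (norm_nonneg v))
      calc ‖∫ z, F' z v ∂ν‖ ≤ ∫ z, ‖F' z v‖ ∂ν := norm_integral_le_integral_norm _
        _ ≤ ∫ z, φ z * ‖v‖ ∂ν := by
            refine integral_mono hFv_int.norm (hφint.mul_const _) fun z => ?_
            rw [Real.norm_eq_abs]
            exact hptw z v
        _ = (∫ z, φ z ∂ν) * ‖v‖ := by rw [integral_mul_const]
    set m : ℝ := ∫ z, φ z ∂ν with hm_def
    have hvar : m ^ 2 ≤ ∫ z, φ z ^ 2 ∂ν := by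
      have h0 : 0 ≤ ∫ z, (φ z - m) ^ 2 ∂ν := integral_nonneg fun z => sq_nonneg _
      have hexp : ∫ z, (φ z - m) ^ 2 ∂ν = (∫ z, φ z ^ 2 ∂ν) - m ^ 2 := by
        have hfun : (fun z => (φ z - m) ^ 2)
            = fun z => (φ z ^ 2 - 2 * m * φ z) + m ^ 2 := by
          funext z; ring
        have h1 : Integrable (fun z => φ z ^ 2 - 2 * m * φ z) ν :=
          hφ2int.sub (hφint.const_mul (2 * m))
        rw [hfun, integral_add h1 (integrable_const _),
          integral_sub hφ2int (hφint.const_mul (2 * m)), MeasureTheory.integral_const_mul,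
          integral_const, probReal_univ]
        simp only [ENNReal.toReal_one, one_smul, ← hm_def]
        ring
      rw [hexp] at h0
      linarith
    have hsum : ∫ z, φ z ^ 2 ∂ν
        = ∑ i : Fin d, ∫ z, (F' z (EuclideanSpace.single i 1)) ^ 2 ∂ν := by
      have hfun : (fun z => φ z ^ 2)
          = fun z => ∑ i : Fin d, (F' z (EuclideanSpace.single i 1)) ^ 2 := by
        funext z
        rw [hφ_def]
        exact Real.sq_sqrt (Finset.sum_nonneg fun i _ => sq_nonneg _)
      rw [hfun, integral_finset_sum]
      intro i _
      refine hbint _ (M ^ 2) ((hF'cont.clm_apply continuous_const).pow 2) fun z => ?_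
      rw [abs_of_nonneg (sq_nonneg _)]
      exact hFele z i
    have hterm : ∀ i : Fin d, ∫ z, (F' z (EuclideanSpace.single i 1)) ^ 2 ∂ν =
        kolP d σ t (fun x => (dP d i f x + t * dXi d i f x) ^ 2) (p, ξ) := by
      intro i
      rw [hkolP (fun x => (dP d i f x + t * dXi d i f x) ^ 2) p]
      congr 1
      funext z
      congr 1
      show (fderiv ℝ f (A p + (z.1, ξ + z.2))) (A (EuclideanSpace.single i 1)) = _
      rw [hAapp, dP, dXi, ← smul_eq_mul, ← ContinuousLinearMap.map_smul, ← ContinuousLinearMap.map_add]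
      congr 1
      refine Prod.ext ?_ ?_
      · show EuclideanSpace.single i (1:ℝ) =
          EuclideanSpace.single i 1 + t • (0 : Ed d)
        simp
      · show t • EuclideanSpace.single i (1:ℝ) =
          (0 : Ed d) + t • EuclideanSpace.single i 1
        simp
    calc ‖∫ z, F' z ∂ν‖ ^ 2 ≤ m ^ 2 := pow_le_pow_left₀ (norm_nonneg _) hnormL 2
      _ ≤ ∫ z, φ z ^ 2 ∂ν := hvar
      _ = ∑ i : Fin d, ∫ z, (F' z (EuclideanSpace.single i 1)) ^ 2 ∂ν := hsum
      _ = ∑ i : Fin d, kolP d σ t (fun x => (dP d i f x + t * dXi d i f x) ^ 2) (p, ξ) :=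
        Finset.sum_congr rfl fun i _ => hterm i
end
end

section
/- Let f : ℝ^d × ℝ^d → ℝ be a continuously differentiable, globally Lipschitz function. Then for every t > 0 and every (p,ξ) ∈ ℝ^d × ℝ^d, the function P_t f is differentiable in ξ and ‖∇_ξ P_t f(p,ξ)‖² ≤ P_t(‖∇_ξ f‖²)(p,ξ). -/
open MeasureTheory Real
open scoped RealInnerProductSpace NNReal

noncomputable section

namespace KolAux

/-- 1-pair density. -/
def g1 (σ t : ℝ) (w : ℝ × ℝ) : ℝ :=
  Real.sqrt 3 / (Real.pi * σ ^ 2 * t ^ 2) *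
    Real.exp (-(2 / σ ^ 2) * (w.1 ^ 2 / t - 3 * w.1 * w.2 / t ^ 2 + 3 * w.2 ^ 2 / t ^ 3))

lemma g1_nonneg (σ t : ℝ) (w : ℝ × ℝ) : 0 ≤ g1 σ t w := by
  unfold g1; positivity

lemma g1_cont (σ t : ℝ) : Continuous (g1 σ t) := by
  unfold g1; fun_prop

lemma g1_eq {σ t : ℝ} (hσ : σ ≠ 0) (ht : t ≠ 0) (w : ℝ × ℝ) :
    g1 σ t w = Real.sqrt 3 / (Real.pi * σ ^ 2 * t ^ 2) *
      (Real.exp (-(1 / (2 * σ ^ 2 * t)) * w.1 ^ 2) *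
      Real.exp (-(6 / (σ ^ 2 * t ^ 3)) * (w.2 - t / 2 * w.1) ^ 2)) := by
  unfold g1
  rw [← Real.exp_add]
  congr 1
  field_simp
  ring

lemma g1_le {σ t : ℝ} (hσ : 0 < σ) (ht : 0 < t) (w : ℝ × ℝ) :
    g1 σ t w ≤ Real.sqrt 3 / (Real.pi * σ ^ 2 * t ^ 2) *
      (Real.exp (-(2 / (7 * σ ^ 2 * t)) * w.1 ^ 2) *
       Real.exp (-(3 / (4 * σ ^ 2 * t ^ 3)) * w.2 ^ 2)) := by
  rw [g1_eq hσ.ne' ht.ne', ← Real.exp_add, ← Real.exp_add]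
  have hC : (0:ℝ) ≤ Real.sqrt 3 / (Real.pi * σ ^ 2 * t ^ 2) := by positivity
  refine mul_le_mul_of_nonneg_left (Real.exp_le_exp.2 ?_) hC
  have hc : (0:ℝ) < 1 / (σ ^ 2 * t ^ 3) := by positivity
  have e1 : -(1 / (2 * σ ^ 2 * t)) * w.1 ^ 2 + -(6 / (σ ^ 2 * t ^ 3)) * (w.2 - t / 2 * w.1) ^ 2
      = (1 / (σ ^ 2 * t ^ 3)) *
        (-(t ^ 2 / 2) * w.1 ^ 2 + -6 * (w.2 - t / 2 * w.1) ^ 2) := by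
    field_simp
  have e2 : -(2 / (7 * σ ^ 2 * t)) * w.1 ^ 2 + -(3 / (4 * σ ^ 2 * t ^ 3)) * w.2 ^ 2
      = (1 / (σ ^ 2 * t ^ 3)) * (-(2 * t ^ 2 / 7) * w.1 ^ 2 + -(3 / 4) * w.2 ^ 2) := by
    field_simp
  rw [e1, e2]
  refine mul_le_mul_of_nonneg_left ?_ hc.le
  nlinarith [sq_nonneg (4 * t * w.1 - 7 * w.2), sq_nonneg (t * w.1), sq_nonneg w.2]

lemma integrable_one_add_abs_mul_exp {b : ℝ} (hb : 0 < b) :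
    Integrable (fun x : ℝ => (1 + |x|) * Real.exp (-b * x ^ 2)) := by
  have h1 : Integrable (fun x : ℝ => |x| * Real.exp (-b * x ^ 2)) := by
    refine (integrable_mul_exp_neg_mul_sq hb).abs.congr (Filter.Eventually.of_forall fun x => ?_)
    simp [abs_mul, abs_of_pos (Real.exp_pos _)]
  refine ((integrable_exp_neg_mul_sq hb).add h1).congr (Filter.Eventually.of_forall fun x => ?_)
  simp only [Pi.add_apply]
  ring

lemma integrable_weight_g1 {σ t : ℝ} (hσ : 0 < σ) (ht : 0 < t) :
    Integrable (fun w : ℝ × ℝ => (1 + |w.1|) * (1 + |w.2|) * g1 σ t w) := by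
  have ha : (0:ℝ) < 2 / (7 * σ ^ 2 * t) := by positivity
  have hb : (0:ℝ) < 3 / (4 * σ ^ 2 * t ^ 3) := by positivity
  have hdom : Integrable (fun w : ℝ × ℝ =>
      (Real.sqrt 3 / (Real.pi * σ ^ 2 * t ^ 2) *
        ((1 + |w.1|) * Real.exp (-(2 / (7 * σ ^ 2 * t)) * w.1 ^ 2))) *
        ((1 + |w.2|) * Real.exp (-(3 / (4 * σ ^ 2 * t ^ 3)) * w.2 ^ 2))) := by
    rw [Measure.volume_eq_prod]
    exact Integrable.mul_prod ((integrable_one_add_abs_mul_exp ha).const_mul _)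
      (integrable_one_add_abs_mul_exp hb)
  refine hdom.mono' ?_ (Filter.Eventually.of_forall fun w => ?_)
  · exact (((continuous_const.add (continuous_fst.abs)).mul
      (continuous_const.add (continuous_snd.abs))).mul (g1_cont σ t)).aestronglyMeasurable
  · have h0 : (0:ℝ) ≤ (1 + |w.1|) * (1 + |w.2|) * g1 σ t w := by
      have := g1_nonneg σ t w; positivity
    rw [Real.norm_of_nonneg h0]
    calc (1 + |w.1|) * (1 + |w.2|) * g1 σ t w
        ≤ (1 + |w.1|) * (1 + |w.2|) * (Real.sqrt 3 / (Real.pi * σ ^ 2 * t ^ 2) *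
            (Real.exp (-(2 / (7 * σ ^ 2 * t)) * w.1 ^ 2) *
             Real.exp (-(3 / (4 * σ ^ 2 * t ^ 3)) * w.2 ^ 2))) := by
          refine mul_le_mul_of_nonneg_left (g1_le hσ ht w) ?_
          positivity
      _ = _ := by ring

lemma integrable_g1 {σ t : ℝ} (hσ : 0 < σ) (ht : 0 < t) : Integrable (g1 σ t) := by
  refine (integrable_weight_g1 hσ ht).mono' (g1_cont σ t).aestronglyMeasurable
    (Filter.Eventually.of_forall fun w => ?_)
  rw [Real.norm_of_nonneg (g1_nonneg σ t w)]
  have h1 : (1:ℝ) ≤ (1 + |w.1|) * (1 + |w.2|) := by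
    nlinarith [abs_nonneg w.1, abs_nonneg w.2]
  nlinarith [g1_nonneg σ t w]

lemma integral_g1 {σ t : ℝ} (hσ : 0 < σ) (ht : 0 < t) : ∫ w : ℝ × ℝ, g1 σ t w = 1 := by
  have ha : (0:ℝ) < 1 / (2 * σ ^ 2 * t) := by positivity
  have hb : (0:ℝ) < 6 / (σ ^ 2 * t ^ 3) := by positivity
  have hint : Integrable (fun w : ℝ × ℝ => g1 σ t w) := integrable_g1 hσ ht
  rw [Measure.volume_eq_prod] at hint ⊢
  have h1 : ∫ w : ℝ × ℝ, g1 σ t w ∂((volume : Measure ℝ).prod volume)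
      = ∫ x : ℝ, ∫ y : ℝ, g1 σ t (x, y) := by
    rw [MeasureTheory.integral_prod _ hint]
  rw [h1]
  have h2 : ∀ x : ℝ, ∫ y : ℝ, g1 σ t (x, y)
      = (Real.sqrt 3 / (Real.pi * σ ^ 2 * t ^ 2) *
          Real.exp (-(1 / (2 * σ ^ 2 * t)) * x ^ 2)) * Real.sqrt (Real.pi / (6 / (σ ^ 2 * t ^ 3))) := by
    intro x
    simp_rw [g1_eq hσ.ne' ht.ne' (_, _), ← mul_assoc]
    rw [MeasureTheory.integral_const_mul]
    congr 1
    have := MeasureTheory.integral_sub_right_eq_self (μ := volume)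
      (fun y : ℝ => Real.exp (-(6 / (σ ^ 2 * t ^ 3)) * y ^ 2)) (t / 2 * x)
    simpa using this.trans (integral_gaussian _)
  simp_rw [h2]
  rw [MeasureTheory.integral_mul_const, MeasureTheory.integral_const_mul, integral_gaussian]
  have h3 : Real.pi / (1 / (2 * σ ^ 2 * t)) = 2 * Real.pi * σ ^ 2 * t := by field_simp
  have h4 : Real.pi / (6 / (σ ^ 2 * t ^ 3)) = Real.pi * σ ^ 2 * t ^ 3 / 6 := by
    rw [div_div_eq_mul_div]; ring
  rw [h3, h4, mul_assoc, ← Real.sqrt_mul (by positivity)]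
  have h5 : 2 * Real.pi * σ ^ 2 * t * (Real.pi * σ ^ 2 * t ^ 3 / 6)
      = (Real.pi * σ ^ 2 * t ^ 2 / Real.sqrt 3) ^ 2 := by
    rw [div_pow, Real.sq_sqrt (by norm_num : (0:ℝ) ≤ 3)]
    ring
  rw [h5, Real.sqrt_sq (by positivity)]
  have h6 : Real.sqrt 3 ≠ 0 := by positivity
  field_simp


section Big

variable {d : ℕ} {σ t : ℝ}

def pairT (d : ℕ) : (Fin d → ℝ × ℝ) ≃ᵐ (Ed d × Ed d) :=
  (MeasurableEquiv.arrowProdEquivProdArrow ℝ ℝ (Fin d)).trans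
    ((MeasurableEquiv.toLp 2 (Fin d → ℝ)).prodCongr
      (MeasurableEquiv.toLp 2 (Fin d → ℝ)))

lemma measurePreserving_pairT :
    MeasurePreserving (pairT d) volume volume := by
  have h1 := MeasureTheory.volume_measurePreserving_arrowProdEquivProdArrow ℝ ℝ (Fin d)
  have h2 := (EuclideanSpace.volume_preserving_symm_measurableEquiv_toLp (Fin d)).symm
  exact (h2.prod h2).comp h1

lemma kolDensity_pairT (w : Fin d → ℝ × ℝ) :
    kolDensity d σ t (pairT d w) = ∏ i, g1 σ t (w i) := rfl

lemma kolDensity_nonneg (z : Ed d × Ed d) : 0 ≤ kolDensity d σ t z := by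
  refine Finset.prod_nonneg fun i _ => by positivity

lemma kolDensity_continuous : Continuous (kolDensity d σ t) := by
  refine continuous_finset_prod _ fun i _ => ?_
  have h1 : Continuous fun z : Ed d × Ed d => z.1 i :=
    (EuclideanSpace.proj (𝕜 := ℝ) i).continuous.comp continuous_fst
  have h2 : Continuous fun z : Ed d × Ed d => z.2 i :=
    (EuclideanSpace.proj (𝕜 := ℝ) i).continuous.comp continuous_snd
  fun_prop

lemma euclid_norm_le_sum (x : Ed d) : ‖x‖ ≤ ∑ i, |x i| := by
  rw [EuclideanSpace.norm_eq]
  have h1 : ∑ i, ‖x i‖ ^ 2 ≤ (∑ i, |x i|) ^ 2 := by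
    simpa [Real.norm_eq_abs] using
      Finset.sum_sq_le_sq_sum_of_nonneg (s := Finset.univ)
        (f := fun i : Fin d => |x i|) (fun i _ => abs_nonneg _)
  calc Real.sqrt (∑ i, ‖x i‖ ^ 2) ≤ Real.sqrt ((∑ i, |x i|) ^ 2) := Real.sqrt_le_sqrt h1
    _ = ∑ i, |x i| := Real.sqrt_sq (Finset.sum_nonneg fun i _ => abs_nonneg _)

lemma one_add_sum_le_prod {ι : Type*} (s : Finset ι) (a : ι → ℝ) (h : ∀ i ∈ s, 0 ≤ a i) :
    1 + ∑ i ∈ s, a i ≤ ∏ i ∈ s, (1 + a i) := by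
  classical
  revert h
  refine Finset.induction_on s (by simp) ?_
  intro j s' hj ih h
  rw [Finset.sum_insert hj, Finset.prod_insert hj]
  have h0 : ∀ i ∈ s', 0 ≤ a i := fun i hi => h i (Finset.mem_insert_of_mem hi)
  have hS : 0 ≤ ∑ i ∈ s', a i := Finset.sum_nonneg h0
  have haj : 0 ≤ a j := h j (Finset.mem_insert_self _ _)
  calc 1 + (a j + ∑ i ∈ s', a i) ≤ (1 + a j) * (1 + ∑ i ∈ s', a i) := by nlinarith
    _ ≤ (1 + a j) * ∏ i ∈ s', (1 + a i) :=
        mul_le_mul_of_nonneg_left (ih h0) (by linarith)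

lemma integrable_weight (hσ : 0 < σ) (ht : 0 < t) :
    Integrable (fun z : Ed d × Ed d => (1 + ‖z.1‖ + ‖z.2‖) * kolDensity d σ t z) := by
  rw [← (measurePreserving_pairT (d := d)).integrable_comp_emb
    (pairT d).measurableEmbedding]
  have hG : Integrable (fun w : Fin d → ℝ × ℝ =>
      ∏ i, ((1 + |(w i).1|) * (1 + |(w i).2|) * g1 σ t (w i))) :=
    Integrable.fintype_prod (fun _ => integrable_weight_g1 hσ ht)
  have hcont : Continuous (fun z : Ed d × Ed d => (1 + ‖z.1‖ + ‖z.2‖) * kolDensity d σ t z) := by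
    have := kolDensity_continuous (d := d) (σ := σ) (t := t)
    fun_prop
  refine hG.mono' ((hcont.measurable.comp (pairT d).measurable).aestronglyMeasurable)
    (Filter.Eventually.of_forall fun w => ?_)
  have hgprod : (0:ℝ) ≤ ∏ i, g1 σ t (w i) :=
    Finset.prod_nonneg fun i _ => g1_nonneg σ t (w i)
  have hcomp : ((fun z : Ed d × Ed d => (1 + ‖z.1‖ + ‖z.2‖) * kolDensity d σ t z) ∘ pairT d) w
      = (1 + ‖(pairT d w).1‖ + ‖(pairT d w).2‖) * ∏ i, g1 σ t (w i) := by
    simp only [Function.comp_apply, kolDensity_pairT]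
  rw [hcomp, Real.norm_of_nonneg (by positivity)]
  have hX : ‖(pairT d w).1‖ ≤ ∑ i, |(w i).1| := euclid_norm_le_sum _
  have hY : ‖(pairT d w).2‖ ≤ ∑ i, |(w i).2| := euclid_norm_le_sum _
  have h1 : 1 + ‖(pairT d w).1‖ + ‖(pairT d w).2‖
      ≤ ∏ i, ((1 + |(w i).1|) * (1 + |(w i).2|)) := by
    calc 1 + ‖(pairT d w).1‖ + ‖(pairT d w).2‖
        ≤ 1 + ∑ i, (|(w i).1| + |(w i).2|) := by
          rw [Finset.sum_add_distrib]; linarith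
      _ ≤ ∏ i, (1 + (|(w i).1| + |(w i).2|)) :=
          one_add_sum_le_prod _ _ (fun i _ => by positivity)
      _ ≤ ∏ i, ((1 + |(w i).1|) * (1 + |(w i).2|)) := by
          refine Finset.prod_le_prod (fun i _ => by positivity) (fun i _ => ?_)
          nlinarith [abs_nonneg (w i).1, abs_nonneg (w i).2]
  calc (1 + ‖(pairT d w).1‖ + ‖(pairT d w).2‖) * ∏ i, g1 σ t (w i)
      ≤ (∏ i, ((1 + |(w i).1|) * (1 + |(w i).2|))) * ∏ i, g1 σ t (w i) :=
        mul_le_mul_of_nonneg_right h1 hgprod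
    _ = ∏ i, ((1 + |(w i).1|) * (1 + |(w i).2|) * g1 σ t (w i)) := by
        rw [← Finset.prod_mul_distrib]

lemma integrable_kolDensity (hσ : 0 < σ) (ht : 0 < t) :
    Integrable (fun z : Ed d × Ed d => kolDensity d σ t z) := by
  refine (integrable_weight hσ ht).mono' kolDensity_continuous.aestronglyMeasurable
    (Filter.Eventually.of_forall fun z => ?_)
  rw [Real.norm_of_nonneg (kolDensity_nonneg z)]
  nlinarith [kolDensity_nonneg (σ := σ) (t := t) z, norm_nonneg z.1, norm_nonneg z.2]

lemma integral_kolDensity (hσ : 0 < σ) (ht : 0 < t) :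
    ∫ z : Ed d × Ed d, kolDensity d σ t z = 1 := by
  rw [← (measurePreserving_pairT (d := d)).integral_comp' (kolDensity d σ t)]
  have : ∀ w : Fin d → ℝ × ℝ, kolDensity d σ t (pairT d w) = ∏ i, g1 σ t (w i) :=
    kolDensity_pairT
  simp_rw [this]
  rw [MeasureTheory.integral_fintype_prod_volume_eq_prod (f := fun _ : Fin d => g1 σ t)]
  simp [integral_g1 hσ ht]

end Big


section Deriv

variable {d : ℕ}

lemma hasFDerivAt_slice {f : Ed d × Ed d → ℝ} (hf : ContDiff ℝ 1 f) (a b : Ed d) :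
    HasFDerivAt (fun y => f (a, y))
      ((fderiv ℝ f (a, b)).comp (ContinuousLinearMap.inr ℝ (Ed d) (Ed d))) b := by
  have h2 : HasFDerivAt (fun y : Ed d => ((a : Ed d), y))
      (ContinuousLinearMap.inr ℝ (Ed d) (Ed d)) b := hasFDerivAt_prodMk_right a b
  exact ((hf.differentiable one_ne_zero) (a, b)).hasFDerivAt.comp b h2

lemma gradXi_eq {f : Ed d × Ed d → ℝ} (hf : ContDiff ℝ 1 f) (x : Ed d × Ed d) :
    gradXi d f x = (InnerProductSpace.toDual ℝ (Ed d)).symm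
      ((fderiv ℝ f x).comp (ContinuousLinearMap.inr ℝ (Ed d) (Ed d))) := by
  unfold gradXi gradient
  rw [(hasFDerivAt_slice hf x.1 x.2).fderiv]

lemma norm_gradXi_eq {f : Ed d × Ed d → ℝ} (hf : ContDiff ℝ 1 f) (x : Ed d × Ed d) :
    ‖gradXi d f x‖ = ‖(fderiv ℝ f x).comp (ContinuousLinearMap.inr ℝ (Ed d) (Ed d))‖ := by
  rw [gradXi_eq hf]
  exact LinearIsometryEquiv.norm_map _ _

lemma norm_comp_inr_le (A : Ed d × Ed d →L[ℝ] ℝ) :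
    ‖A.comp (ContinuousLinearMap.inr ℝ (Ed d) (Ed d))‖ ≤ ‖A‖ := by
  refine ContinuousLinearMap.opNorm_le_bound _ (norm_nonneg A) fun x => ?_
  have hx : ‖(ContinuousLinearMap.inr ℝ (Ed d) (Ed d)) x‖ = ‖x‖ := by
    simp [Prod.norm_def]
  calc ‖(A.comp (ContinuousLinearMap.inr ℝ (Ed d) (Ed d))) x‖
      = ‖A ((ContinuousLinearMap.inr ℝ (Ed d) (Ed d)) x)‖ := rfl
    _ ≤ ‖A‖ * ‖(ContinuousLinearMap.inr ℝ (Ed d) (Ed d)) x‖ := A.le_opNorm _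
    _ = ‖A‖ * ‖x‖ := by rw [hx]

lemma norm_gradXi_le {f : Ed d × Ed d → ℝ} (hf : ContDiff ℝ 1 f) {K : ℝ≥0}
    (hLip : LipschitzWith K f) (x : Ed d × Ed d) : ‖gradXi d f x‖ ≤ K := by
  rw [norm_gradXi_eq hf]
  exact (norm_comp_inr_le _).trans (norm_fderiv_le_of_lipschitz ℝ hLip)

end Deriv

end KolAux

set_option maxHeartbeats 1000000 in
/-- **Bakry–Émery type estimate for the Kolmogorov semigroup (ξ-gradient).**
If `f : ℝ^d × ℝ^d → ℝ` is `C¹` and globally Lipschitz, then for `t > 0` the function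
`P_t f` is differentiable in `ξ` and `‖∇_ξ P_t f(p,ξ)‖² ≤ P_t (‖∇_ξ f‖²)(p,ξ)`. -/
theorem kolmogorov_gradXi_bound (d : ℕ) (hd : 1 ≤ d) (σ : ℝ) (hσ : 0 < σ)
    (f : Ed d × Ed d → ℝ) (hf : ContDiff ℝ 1 f) (K : ℝ≥0) (hLip : LipschitzWith K f)
    (t : ℝ) (ht : 0 < t) (p ξ : Ed d) :
    DifferentiableAt ℝ (fun ξ' => kolP d σ t f (p, ξ')) ξ ∧
    ‖gradient (fun ξ' => kolP d σ t f (p, ξ')) ξ‖ ^ 2 ≤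
      kolP d σ t (fun x => ‖gradXi d f x‖ ^ 2) (p, ξ) := by
  classical
  open KolAux in
  have htne : t ≠ 0 := ht.ne'
  set ρ : Ed d × Ed d → ℝ := kolDensity d σ t with hρdef
  have hkolP : (fun ξ' => kolP d σ t f (p, ξ')) =
      fun ξ' => ∫ z : Ed d × Ed d, f (p + z.1, ξ' + t • p + z.2) * ρ z := by
    funext ξ'; simp [kolP, htne, hρdef]
  have hρ0 : ∀ z, 0 ≤ ρ z := KolAux.kolDensity_nonneg
  have hρc : Continuous ρ := KolAux.kolDensity_continuous
  have hρint : Integrable ρ := KolAux.integrable_kolDensity hσ ht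
  have hρ1 : ∫ z, ρ z = 1 := KolAux.integral_kolDensity hσ ht
  have hwt : Integrable (fun z : Ed d × Ed d => (1 + ‖z.1‖ + ‖z.2‖) * ρ z) :=
    KolAux.integrable_weight hσ ht
  have hfc : Continuous f := hf.continuous
  have hfd : Differentiable ℝ f := hf.differentiable one_ne_zero
  set Φ : Ed d → Ed d × Ed d → Ed d × Ed d :=
    fun ξ' z => (p + z.1, ξ' + t • p + z.2) with hΦdef
  set F : Ed d → Ed d × Ed d → ℝ := fun ξ' z => f (Φ ξ' z) * ρ z with hFdef
  set F' : Ed d × Ed d → (Ed d →L[ℝ] ℝ) := fun z =>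
    ρ z • ((fderiv ℝ f (Φ ξ z)).comp (ContinuousLinearMap.inr ℝ (Ed d) (Ed d))) with hF'def
  have hΦc : ∀ ξ', Continuous (Φ ξ') := fun ξ' => by
    apply Continuous.prodMk
    · exact continuous_const.add continuous_fst
    · exact continuous_const.add continuous_snd
  have hFmeas : ∀ᶠ ξ' in nhds ξ, AEStronglyMeasurable (F ξ') volume :=
    Filter.Eventually.of_forall fun ξ' =>
      (((hfc.comp (hΦc ξ')).mul hρc)).aestronglyMeasurable
  have hFint : Integrable (F ξ) := by
    refine (hwt.const_mul (|f (p, ξ + t • p)| + K)).mono'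
      (((hfc.comp (hΦc ξ)).mul hρc).aestronglyMeasurable)
      (Filter.Eventually.of_forall fun z => ?_)
    have hdist : dist (Φ ξ z) (p, ξ + t • p) ≤ ‖z.1‖ + ‖z.2‖ := by
      rw [Prod.dist_eq]
      have e1 : dist (p + z.1) p = ‖z.1‖ := by simp [dist_eq_norm]
      have e2 : dist (ξ + t • p + z.2) (ξ + t • p) = ‖z.2‖ := by simp [dist_eq_norm]
      rw [e1, e2]
      exact max_le (by linarith [norm_nonneg z.2]) (by linarith [norm_nonneg z.1])
    have h1 : |f (Φ ξ z) - f (p, ξ + t • p)| ≤ K * (‖z.1‖ + ‖z.2‖) := by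
      have := hLip.dist_le_mul (Φ ξ z) (p, ξ + t • p)
      rw [Real.dist_eq] at this
      exact this.trans (by gcongr)
    have h2 : |f (Φ ξ z)| ≤ |f (p, ξ + t • p)| + K * (‖z.1‖ + ‖z.2‖) := by
      calc |f (Φ ξ z)| = |(f (Φ ξ z) - f (p, ξ + t • p)) + f (p, ξ + t • p)| := by
            rw [sub_add_cancel]
        _ ≤ |f (Φ ξ z) - f (p, ξ + t • p)| + |f (p, ξ + t • p)| := abs_add_le _ _
        _ ≤ |f (p, ξ + t • p)| + K * (‖z.1‖ + ‖z.2‖) := by linarith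
    have hn : ‖F ξ z‖ = |f (Φ ξ z)| * ρ z := by
      rw [hFdef]; simp only [Real.norm_eq_abs, abs_mul, abs_of_nonneg (hρ0 z)]
    rw [hn]
    calc |f (Φ ξ z)| * ρ z
        ≤ (|f (p, ξ + t • p)| + K * (‖z.1‖ + ‖z.2‖)) * ρ z :=
          mul_le_mul_of_nonneg_right h2 (hρ0 z)
      _ ≤ ((|f (p, ξ + t • p)| + (K : ℝ)) * (1 + ‖z.1‖ + ‖z.2‖)) * ρ z := by
          refine mul_le_mul_of_nonneg_right ?_ (hρ0 z)
          have hK : (0:ℝ) ≤ K := K.coe_nonneg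
          have habs := abs_nonneg (f (p, ξ + t • p))
          nlinarith [mul_nonneg habs (norm_nonneg z.1), mul_nonneg habs (norm_nonneg z.2),
            mul_nonneg hK (norm_nonneg z.1), mul_nonneg hK (norm_nonneg z.2)]
      _ = (|f (p, ξ + t • p)| + (K : ℝ)) * ((1 + ‖z.1‖ + ‖z.2‖) * ρ z) := by ring
  have hF'c : Continuous F' := by
    refine hρc.smul ?_
    exact Continuous.clm_comp ((hf.continuous_fderiv one_ne_zero).comp (hΦc ξ)) continuous_const
  have hlip : ∀ᵐ z : Ed d × Ed d, LipschitzOnWith (Real.nnabs ((K : ℝ) * ρ z))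
      (fun ξ' => F ξ' z) (Metric.ball ξ 1) := by
    refine Filter.Eventually.of_forall fun z => ?_
    have h2 : LipschitzWith 1 (fun ξ' : Ed d => Φ ξ' z) := by
      refine LipschitzWith.of_dist_le_mul fun a b => ?_
      rw [Prod.dist_eq]
      have e1 : dist (p + z.1 : Ed d) (p + z.1) = 0 := dist_self _
      have e2 : dist (a + t • p + z.2) (b + t • p + z.2) = dist a b := by
        simp [dist_eq_norm, add_sub_add_right_eq_sub]
      simp only [hΦdef, e2]
      rw [dist_self]
      exact max_le (by positivity) (by simp)
    have h1 : LipschitzWith K (fun ξ' : Ed d => f (Φ ξ' z)) := by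
      have := hLip.comp h2
      simpa [Function.comp_def] using this
    have h3 : LipschitzWith (K * ‖ρ z‖₊) (fun ξ' => F ξ' z) := by
      refine LipschitzWith.of_dist_le_mul fun a b => ?_
      have e1 : dist (F a z) (F b z) = dist (f (Φ a z)) (f (Φ b z)) * |ρ z| := by
        rw [hFdef]
        simp only [Real.dist_eq]
        rw [← sub_mul, abs_mul]
      rw [e1]
      calc dist (f (Φ a z)) (f (Φ b z)) * |ρ z| ≤ (K * dist a b) * |ρ z| := by
            refine mul_le_mul_of_nonneg_right (h1.dist_le_mul a b) (abs_nonneg _)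
        _ = ↑(K * ‖ρ z‖₊) * dist a b := by
            push_cast
            rw [Real.norm_eq_abs]
            ring
    have hcst : (K * ‖ρ z‖₊) = Real.nnabs ((K : ℝ) * ρ z) := by
      ext
      simp [abs_of_nonneg (mul_nonneg K.2 (hρ0 z)), abs_of_nonneg (hρ0 z),
        Real.norm_eq_abs]
    rw [← hcst]
    exact h3.lipschitzOnWith
  have hdiff : ∀ᵐ z : Ed d × Ed d, HasFDerivAt (fun ξ' => F ξ' z) (F' z) ξ := by
    refine Filter.Eventually.of_forall fun z => ?_
    have h2 : HasFDerivAt (fun ξ' : Ed d => (ξ' + t • p + z.2 : Ed d))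
        (ContinuousLinearMap.id ℝ (Ed d)) ξ := by
      exact ((hasFDerivAt_id ξ).add_const (t • p)).add_const z.2
    have h3 : HasFDerivAt (fun ξ' : Ed d => Φ ξ' z)
        ((0 : Ed d →L[ℝ] Ed d).prod (ContinuousLinearMap.id ℝ (Ed d))) ξ :=
      HasFDerivAt.prodMk (hasFDerivAt_const (p + z.1) ξ) h2
    have h4 : HasFDerivAt (fun ξ' : Ed d => f (Φ ξ' z))
        ((fderiv ℝ f (Φ ξ z)).comp (ContinuousLinearMap.inr ℝ (Ed d) (Ed d))) ξ :=
      (hfd (Φ ξ z)).hasFDerivAt.comp ξ h3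
    have h5 := h4.mul_const (ρ z)
    have : F' z = ρ z • ((fderiv ℝ f (Φ ξ z)).comp (ContinuousLinearMap.inr ℝ (Ed d) (Ed d))) := rfl
    rw [this]
    exact h5
  obtain ⟨hF'int, hderiv⟩ :=
    hasFDerivAt_integral_of_dominated_loc_of_lip (μ := volume) (F := F) (F' := F') (x₀ := ξ)
      (bound := fun z => (K : ℝ) * ρ z) (Metric.ball_mem_nhds ξ zero_lt_one) hFmeas hFint
      hF'c.aestronglyMeasurable hlip (hρint.const_mul _) hdiff
  have hderiv' : HasFDerivAt (fun ξ' => kolP d σ t f (p, ξ')) (∫ z, F' z) ξ := by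
    rw [hkolP]; exact hderiv
  refine ⟨hderiv'.differentiableAt, ?_⟩
  have hgrad : gradient (fun ξ' => kolP d σ t f (p, ξ')) ξ =
      (InnerProductSpace.toDual ℝ (Ed d)).symm (∫ z, F' z) := by
    unfold gradient
    rw [hderiv'.fderiv]
  rw [hgrad, LinearIsometryEquiv.norm_map]
  set h : Ed d × Ed d → ℝ := fun z => ‖gradXi d f (Φ ξ z)‖ with hhdef
  have hnorm : ∀ z, ‖F' z‖ = h z * ρ z := fun z => by
    have e : h z = ‖(fderiv ℝ f (Φ ξ z)).comp (ContinuousLinearMap.inr ℝ (Ed d) (Ed d))‖ :=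
      KolAux.norm_gradXi_eq hf (Φ ξ z)
    calc ‖F' z‖
        = ‖ρ z • ((fderiv ℝ f (Φ ξ z)).comp (ContinuousLinearMap.inr ℝ (Ed d) (Ed d)))‖ := rfl
      _ = ‖ρ z‖ * ‖(fderiv ℝ f (Φ ξ z)).comp (ContinuousLinearMap.inr ℝ (Ed d) (Ed d))‖ :=
          norm_smul (ρ z) ((fderiv ℝ f (Φ ξ z)).comp (ContinuousLinearMap.inr ℝ (Ed d) (Ed d)))
      _ = h z * ρ z := by
          rw [e, Real.norm_eq_abs, abs_of_nonneg (hρ0 z)]; ring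
  have hh0 : ∀ z, 0 ≤ h z := fun z => norm_nonneg _
  have hhK : ∀ z, h z ≤ K := fun z => KolAux.norm_gradXi_le hf hLip _
  have hhc : Continuous h := by
    have : h = fun z => ‖(fderiv ℝ f (Φ ξ z)).comp (ContinuousLinearMap.inr ℝ (Ed d) (Ed d))‖ := by
      funext z; exact KolAux.norm_gradXi_eq hf (Φ ξ z)
    rw [this]
    exact (Continuous.clm_comp ((hf.continuous_fderiv one_ne_zero).comp (hΦc ξ)) continuous_const).norm
  have hint1 : Integrable (fun z => h z * ρ z) := by
    refine (hρint.const_mul (K : ℝ)).mono' ((hhc.mul hρc).aestronglyMeasurable)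
      (Filter.Eventually.of_forall fun z => ?_)
    rw [Real.norm_eq_abs, abs_of_nonneg (mul_nonneg (hh0 z) (hρ0 z))]
    exact mul_le_mul_of_nonneg_right (hhK z) (hρ0 z)
  have hint2 : Integrable (fun z => h z ^ 2 * ρ z) := by
    refine (hρint.const_mul ((K : ℝ) ^ 2)).mono'
      (((hhc.pow 2).mul hρc).aestronglyMeasurable)
      (Filter.Eventually.of_forall fun z => ?_)
    rw [Real.norm_eq_abs, abs_of_nonneg (mul_nonneg (sq_nonneg _) (hρ0 z))]
    exact mul_le_mul_of_nonneg_right (pow_le_pow_left₀ (hh0 z) (hhK z) 2) (hρ0 z)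
  have hle1 : ‖∫ z, F' z‖ ≤ ∫ z, h z * ρ z := by
    calc ‖∫ z, F' z‖ ≤ ∫ z, ‖F' z‖ := norm_integral_le_integral_norm _
      _ = ∫ z, h z * ρ z := by simp_rw [hnorm]
  have hm0 : 0 ≤ ∫ z, h z * ρ z :=
    integral_nonneg fun z => mul_nonneg (hh0 z) (hρ0 z)
  set m : ℝ := ∫ z, h z * ρ z with hmdef
  have hvar : 0 ≤ ∫ z, (h z - m) ^ 2 * ρ z :=
    integral_nonneg fun z => mul_nonneg (sq_nonneg _) (hρ0 z)
  have hexp : ∫ z, (h z - m) ^ 2 * ρ z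
      = (∫ z, h z ^ 2 * ρ z) - (2 * m) * m + m ^ 2 * 1 := by
    have e1 : (fun z => (h z - m) ^ 2 * ρ z)
        = fun z => (h z ^ 2 * ρ z - (2 * m) * (h z * ρ z)) + m ^ 2 * ρ z := by
      funext z; ring
    have i1 : Integrable (fun z => (2 * m) * (h z * ρ z)) := hint1.const_mul _
    have i2 : Integrable (fun z => m ^ 2 * ρ z) := hρint.const_mul _
    have i3 : Integrable (fun z => h z ^ 2 * ρ z - (2 * m) * (h z * ρ z)) := hint2.sub i1
    rw [e1, MeasureTheory.integral_add i3 i2, MeasureTheory.integral_sub hint2 i1,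
      MeasureTheory.integral_const_mul, MeasureTheory.integral_const_mul, hρ1]
  have hkey : m ^ 2 ≤ ∫ z, h z ^ 2 * ρ z := by nlinarith [hvar, hexp]
  have hfinal : kolP d σ t (fun x => ‖gradXi d f x‖ ^ 2) (p, ξ) = ∫ z, h z ^ 2 * ρ z := by
    simp only [kolP, if_neg htne]
    rfl
  rw [hfinal]
  calc ‖∫ z, F' z‖ ^ 2 ≤ m ^ 2 := by
        exact pow_le_pow_left₀ (norm_nonneg _) hle1 2
    _ ≤ ∫ z, h z ^ 2 * ρ z := hkey
end
end

section
/- (Wang–Harnack inequality.) Let f : ℝ^d × ℝ^d → ℝ be a nonnegative bounded Borel function. Then for every t > 0, every α > 1, and all points (p,ξ), (p′,ξ′) ∈ ℝ^d × ℝ^d, (P_t f(p,ξ))^α ≤ C_α(t,(p,ξ),(p′,ξ′)) · P_t(f^α)(p′,ξ′), where C_α(t,(p,ξ),(p′,ξ′)) = exp( (α/(α−1)) · [ (6/(σ² t³)) Σ_{i=1}^d ((t/2)(p′_i − p_i) + (ξ′_i − ξ_i))² + (1/(2σ² t)) Σ_{i=1}^d (p′_i − p_i)² ] ). -/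
open MeasureTheory Real
open scoped RealInnerProductSpace NNReal

noncomputable section

namespace WangHarnack

lemma gauss2d (A c s : ℝ) (hA : 0 < A) (hc : 0 < c) :
    Integrable (fun w : ℝ × ℝ => exp (-A * w.1 ^ 2) * exp (-c * (w.2 - s * w.1) ^ 2)) ∧
      ∫ w : ℝ × ℝ, exp (-A * w.1 ^ 2) * exp (-c * (w.2 - s * w.1) ^ 2)
        = Real.sqrt (π / A) * Real.sqrt (π / c) := by
  have hmeas : AEStronglyMeasurable
      (fun w : ℝ × ℝ => exp (-A * w.1 ^ 2) * exp (-c * (w.2 - s * w.1) ^ 2))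
      ((volume : Measure ℝ).prod volume) := by
    apply Measurable.aestronglyMeasurable; fun_prop
  have hint : ∀ x : ℝ, Integrable (fun y : ℝ => exp (-A * x ^ 2) * exp (-c * (y - s * x) ^ 2)) := by
    intro x
    exact (((integrable_exp_neg_mul_sq hc).comp_sub_right (s * x))).const_mul _
  have hnorm : ∀ x : ℝ, (∫ y : ℝ, ‖exp (-A * x ^ 2) * exp (-c * (y - s * x) ^ 2)‖)
      = Real.sqrt (π / c) * exp (-A * x ^ 2) := by
    intro x
    have : ∀ y : ℝ, ‖exp (-A * x ^ 2) * exp (-c * (y - s * x) ^ 2)‖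
        = exp (-A * x ^ 2) * exp (-c * (y - s * x) ^ 2) := by
      intro y
      rw [Real.norm_eq_abs, abs_of_nonneg (by positivity)]
    simp_rw [this]
    rw [integral_const_mul _,
      integral_sub_right_eq_self (fun u : ℝ => exp (-c * u ^ 2)) (s * x), integral_gaussian]
    ring
  have hInt : Integrable (fun w : ℝ × ℝ => exp (-A * w.1 ^ 2) * exp (-c * (w.2 - s * w.1) ^ 2))
      ((volume : Measure ℝ).prod volume) := by
    rw [integrable_prod_iff hmeas]
    constructor
    · exact Filter.Eventually.of_forall hint
    · simp_rw [hnorm]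
      exact ((integrable_exp_neg_mul_sq hA).const_mul _)
  constructor
  · exact hInt
  · rw [show (volume : Measure (ℝ × ℝ)) = (volume : Measure ℝ).prod volume from rfl]
    rw [integral_prod _ hInt]
    have : ∀ x : ℝ, (∫ y : ℝ, exp (-A * x ^ 2) * exp (-c * (y - s * x) ^ 2))
        = Real.sqrt (π / c) * exp (-A * x ^ 2) := by
      intro x
      rw [integral_const_mul _,
        integral_sub_right_eq_self (fun u : ℝ => exp (-c * u ^ 2)) (s * x), integral_gaussian]
      ring
    simp_rw [this]
    rw [integral_const_mul _, integral_gaussian]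
    ring

def K0 (σ t : ℝ) : ℝ := Real.sqrt 3 / (π * σ ^ 2 * t ^ 2)

def G1 (σ t : ℝ) : ℝ × ℝ → ℝ := fun w =>
  K0 σ t * exp (-(2 / σ ^ 2) * (w.1 ^ 2 / t - 3 * w.1 * w.2 / t ^ 2 + 3 * w.2 ^ 2 / t ^ 3))

variable {d : ℕ} {σ t : ℝ}

lemma K0_pos (hσ : 0 < σ) (ht : 0 < t) : 0 < K0 σ t := by
  unfold K0
  have := Real.pi_pos
  positivity

lemma kolDensity_eq_prod (z : Ed d × Ed d) :
    kolDensity d σ t z = ∏ i, G1 σ t (z.1 i, z.2 i) := rfl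

lemma G1_pos (hσ : 0 < σ) (ht : 0 < t) (w : ℝ × ℝ) : 0 < G1 σ t w :=
  mul_pos (K0_pos hσ ht) (exp_pos _)

lemma kolDensity_pos (hσ : 0 < σ) (ht : 0 < t) (z : Ed d × Ed d) :
    0 < kolDensity d σ t z := by
  rw [kolDensity_eq_prod]
  exact Finset.prod_pos fun i _ => G1_pos hσ ht _

lemma G1_eq (hσ : 0 < σ) (ht : 0 < t) (w : ℝ × ℝ) :
    G1 σ t w = K0 σ t * (exp (-(1 / (2 * σ ^ 2 * t)) * w.1 ^ 2) *
      exp (-(6 / (σ ^ 2 * t ^ 3)) * (w.2 - t / 2 * w.1) ^ 2)) := by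
  unfold G1
  rw [← Real.exp_add]
  congr 1
  have hσ' : σ ≠ 0 := hσ.ne'
  have ht' : t ≠ 0 := ht.ne'
  field_simp
  ring

lemma integrable_G1 (hσ : 0 < σ) (ht : 0 < t) : Integrable (G1 σ t) := by
  have hA : (0 : ℝ) < 1 / (2 * σ ^ 2 * t) := by positivity
  have hc : (0 : ℝ) < 6 / (σ ^ 2 * t ^ 3) := by positivity
  have h := (gauss2d (1 / (2 * σ ^ 2 * t)) (6 / (σ ^ 2 * t ^ 3)) (t / 2) hA hc).1
  have heq : G1 σ t = fun w : ℝ × ℝ => K0 σ t *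
      (exp (-(1 / (2 * σ ^ 2 * t)) * w.1 ^ 2) *
        exp (-(6 / (σ ^ 2 * t ^ 3)) * (w.2 - t / 2 * w.1) ^ 2)) :=
    funext fun w => G1_eq hσ ht w
  rw [heq]
  exact h.const_mul _

lemma integral_G1 (hσ : 0 < σ) (ht : 0 < t) : ∫ w : ℝ × ℝ, G1 σ t w = 1 := by
  have hA : (0 : ℝ) < 1 / (2 * σ ^ 2 * t) := by positivity
  have hc : (0 : ℝ) < 6 / (σ ^ 2 * t ^ 3) := by positivity
  have h := (gauss2d (1 / (2 * σ ^ 2 * t)) (6 / (σ ^ 2 * t ^ 3)) (t / 2) hA hc).2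
  simp_rw [G1_eq hσ ht]
  rw [integral_const_mul _, h]
  have hπ := Real.pi_pos
  have h3 : (Real.sqrt 3) ^ 2 = 3 := Real.sq_sqrt (by norm_num)
  have hs3 : (0 : ℝ) < Real.sqrt 3 := by positivity
  rw [← Real.sqrt_mul (by positivity)]
  have hxy : π / (1 / (2 * σ ^ 2 * t)) * (π / (6 / (σ ^ 2 * t ^ 3)))
      = (π * σ ^ 2 * t ^ 2 / Real.sqrt 3) ^ 2 := by
    rw [div_pow, h3]
    field_simp
    ring
  rw [hxy, Real.sqrt_sq (by positivity)]
  unfold K0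
  field_simp

def eE (d : ℕ) : (Fin d → ℝ × ℝ) ≃ᵐ Ed d × Ed d :=
  (MeasurableEquiv.arrowProdEquivProdArrow ℝ ℝ (Fin d)).trans
    ((MeasurableEquiv.toLp 2 (Fin d → ℝ)).prodCongr
      (MeasurableEquiv.toLp 2 (Fin d → ℝ)))

lemma eE_mp (d : ℕ) : MeasurePreserving (eE d) volume volume := by
  have h1 : MeasurePreserving (MeasurableEquiv.arrowProdEquivProdArrow ℝ ℝ (Fin d))
      (volume : Measure (Fin d → ℝ × ℝ))
      ((volume : Measure (Fin d → ℝ)).prod (volume : Measure (Fin d → ℝ))) :=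
    measurePreserving_arrowProdEquivProdArrow ℝ ℝ (Fin d) (fun _ => volume) (fun _ => volume)
  have h2 : MeasurePreserving
      ((MeasurableEquiv.toLp 2 (Fin d → ℝ)).prodCongr
        (MeasurableEquiv.toLp 2 (Fin d → ℝ)))
      ((volume : Measure (Fin d → ℝ)).prod (volume : Measure (Fin d → ℝ)))
      (volume : Measure (Ed d × Ed d)) :=
    ((EuclideanSpace.volume_preserving_symm_measurableEquiv_toLp (Fin d)).symm).prod
      ((EuclideanSpace.volume_preserving_symm_measurableEquiv_toLp (Fin d)).symm)
  exact h1.trans h2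

lemma comp_eE (F : ℝ × ℝ → ℝ) :
    (fun z : Ed d × Ed d => ∏ i, F (z.1 i, z.2 i)) ∘ (eE d) = fun w => ∏ i, F (w i) := rfl

lemma integrable_kolDensity (hσ : 0 < σ) (ht : 0 < t) :
    Integrable (kolDensity d σ t) := by
  have heq : kolDensity d σ t = fun z : Ed d × Ed d => ∏ i, G1 σ t (z.1 i, z.2 i) :=
    funext fun z => kolDensity_eq_prod z
  rw [heq, ← (eE_mp d).integrable_comp_emb (eE d).measurableEmbedding, comp_eE]
  exact Integrable.fintype_prod (f := fun _ : Fin d => G1 σ t) fun _ => integrable_G1 hσ ht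

lemma integral_kolDensity (hσ : 0 < σ) (ht : 0 < t) :
    ∫ z : Ed d × Ed d, kolDensity d σ t z = 1 := by
  have h : ∫ z : Ed d × Ed d, kolDensity d σ t z
      = ∫ w : Fin d → ℝ × ℝ, ∏ i, G1 σ t (w i) :=
    ((eE_mp d).integral_comp' (fun z : Ed d × Ed d => kolDensity d σ t z)).symm
  rw [h, MeasureTheory.integral_fintype_prod_volume_eq_pow (G1 σ t), integral_G1 hσ ht,
    one_pow]

lemma measurable_kolDensity : Measurable (kolDensity d σ t) := by
  have h : Measurable ((fun z : Ed d × Ed d => ∏ i, G1 σ t (z.1 i, z.2 i)) ∘ (eE d)) := by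
    rw [comp_eE]
    apply Finset.measurable_prod
    intro i _
    have hm : Measurable (G1 σ t) := by unfold G1; fun_prop
    exact hm.comp (measurable_pi_apply i)
  have h2 := h.comp (eE d).symm.measurable
  have heq : ((fun z : Ed d × Ed d => ∏ i, G1 σ t (z.1 i, z.2 i)) ∘ (eE d)) ∘ (eE d).symm
      = kolDensity d σ t := by
    funext z
    simp only [Function.comp_apply, MeasurableEquiv.apply_symm_apply]
    exact (kolDensity_eq_prod z).symm
  rwa [heq] at h2

instance : (volume : Measure (Ed d × Ed d)).IsAddRightInvariant :=
  Measure.prod.instIsAddRightInvariant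

lemma kolDensity_exp (z : Ed d × Ed d) :
    kolDensity d σ t z = (K0 σ t) ^ d *
      exp (∑ i, -(2 / σ ^ 2) *
        ((z.1 i) ^ 2 / t - 3 * z.1 i * z.2 i / t ^ 2 + 3 * (z.2 i) ^ 2 / t ^ 3)) := by
  unfold kolDensity
  rw [Finset.prod_mul_distrib, Finset.prod_const, Real.exp_sum]
  simp [K0, Finset.card_univ]

lemma aux_collect (k : ℝ) (hk : 0 < k) (b x y : ℝ) :
    k ^ b * Real.exp x * (k ^ (1 - b) * Real.exp y) = k * Real.exp (x + y) := by
  rw [Real.exp_add,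
    show k ^ b * Real.exp x * (k ^ (1 - b) * Real.exp y)
      = k ^ b * k ^ (1 - b) * (Real.exp x * Real.exp y) from by ring,
    ← Real.rpow_add hk]
  norm_num

lemma key_rpow (hσ : 0 < σ) (ht : 0 < t) (β : ℝ) (c z : Ed d × Ed d) :
    kolDensity d σ t (z + c) ^ β * kolDensity d σ t z ^ (1 - β) =
      Real.exp (β * (β - 1) *
        ∑ i, (2 / σ ^ 2) *
          ((c.1 i) ^ 2 / t - 3 * c.1 i * c.2 i / t ^ 2 + 3 * (c.2 i) ^ 2 / t ^ 3)) *
      kolDensity d σ t (z + β • c) := by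
  have hKd : (0 : ℝ) < (K0 σ t) ^ d := pow_pos (K0_pos hσ ht) d
  have hσ' : σ ≠ 0 := hσ.ne'
  have ht' : t ≠ 0 := ht.ne'
  rw [kolDensity_exp (z + c), kolDensity_exp z, kolDensity_exp (z + β • c),
    Real.mul_rpow hKd.le (exp_nonneg _), Real.mul_rpow hKd.le (exp_nonneg _),
    ← Real.exp_mul, ← Real.exp_mul, aux_collect _ hKd,
    show ∀ e k a : ℝ, e * (k * a) = k * (e * a) from fun _ _ _ => by ring,
    ← Real.exp_add]
  congr 2
  rw [Finset.sum_mul, Finset.sum_mul, Finset.mul_sum, ← Finset.sum_add_distrib,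
    ← Finset.sum_add_distrib]
  refine Finset.sum_congr rfl fun i _ => ?_
  simp only [Prod.fst_add, Prod.snd_add, Prod.smul_fst, Prod.smul_snd, PiLp.add_apply,
    PiLp.smul_apply, smul_eq_mul]
  field_simp
  ring

end WangHarnack

/-- **Wang–Harnack inequality for the Kolmogorov semigroup.**
For a nonnegative bounded Borel function `f`, `t > 0`, `α > 1` and any two points,
`(P_t f(p,ξ))^α ≤ C_α(t,(p,ξ),(p',ξ')) · P_t(f^α)(p',ξ')` with the explicit constant
`C_α = exp((α/(α−1))[(6/(σ²t³)) ∑ ((t/2)(p'_i−p_i)+(ξ'_i−ξ_i))² + (1/(2σ²t)) ∑ (p'_i−p_i)²])`. -/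
theorem kolmogorov_wang_harnack (d : ℕ) (hd : 1 ≤ d) (σ : ℝ) (hσ : 0 < σ)
    (f : Ed d × Ed d → ℝ) (hmeas : Measurable f) (hnn : ∀ x, 0 ≤ f x)
    (C : ℝ) (hbd : ∀ x, f x ≤ C)
    (t : ℝ) (ht : 0 < t) (α : ℝ) (hα : 1 < α) (p ξ p' ξ' : Ed d) :
    kolP d σ t f (p, ξ) ^ α ≤
      Real.exp (α / (α - 1) *
          (6 / (σ ^ 2 * t ^ 3) * ∑ i : Fin d, (t / 2 * (p' i - p i) + (ξ' i - ξ i)) ^ 2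
            + 1 / (2 * σ ^ 2 * t) * ∑ i : Fin d, (p' i - p i) ^ 2)) *
        kolP d σ t (fun x => f x ^ α) (p', ξ') := by
  have hσ' : σ ≠ 0 := hσ.ne'
  have ht' : t ≠ 0 := ht.ne'
  have hα0 : (0 : ℝ) < α := lt_trans one_pos hα
  have hαm1 : (0 : ℝ) < α - 1 := by linarith
  set β : ℝ := α / (α - 1) with hβdef
  have hβ0 : (0 : ℝ) < β := by positivity
  have hpq : α.HolderConjugate β := (Real.holderConjugate_iff_eq_conjExponent hα).2 hβdef
  set ρ : Ed d × Ed d → ℝ := kolDensity d σ t with hρdef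
  have hρpos : ∀ z, 0 < ρ z := WangHarnack.kolDensity_pos hσ ht
  have hρint : Integrable ρ := WangHarnack.integrable_kolDensity hσ ht
  have hρmeas : Measurable ρ := WangHarnack.measurable_kolDensity
  set a : Ed d := p' - p with hadef
  set b : Ed d := ξ' - ξ + t • (p' - p) with hbdef
  set c : Ed d × Ed d := (a, b) with hcdef
  set g : Ed d × Ed d → ℝ := fun z => f (p' + z.1, ξ' + t • p' + z.2) with hgdef
  have hg_meas : Measurable g := by
    apply hmeas.comp
    exact (measurable_const.add measurable_fst).prodMk (measurable_const.add measurable_snd)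
  have hg_nonneg : ∀ z, 0 ≤ g z := fun z => hnn _
  have hg_bd : ∀ z, g z ≤ C := fun z => hbd _
  -- Step A : change of variables
  have stepA : kolP d σ t f (p, ξ) = ∫ z : Ed d × Ed d, g z * ρ (z + c) := by
    have h0 : kolP d σ t f (p, ξ)
        = ∫ z : Ed d × Ed d, f (p + z.1, ξ + t • p + z.2) * ρ z := by
      unfold kolP; rw [if_neg ht']
    rw [h0, ← integral_add_right_eq_self
      (fun z : Ed d × Ed d => f (p + z.1, ξ + t • p + z.2) * ρ z) c]
    congr 1
    funext z
    have h1 : p + (z + c).1 = p' + z.1 := by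
      rw [hcdef]
      simp only [Prod.fst_add]
      rw [hadef]; abel
    have h2 : ξ + t • p + (z + c).2 = ξ' + t • p' + z.2 := by
      rw [hcdef]
      simp only [Prod.snd_add]
      rw [hbdef, smul_sub]; abel
    rw [h1, h2]
  -- the Hölder pair
  set F : Ed d × Ed d → ℝ := fun z => g z * ρ z ^ (1 / α) with hFdef
  set G : Ed d × Ed d → ℝ := fun z => ρ (z + c) * ρ z ^ (-(1 / α)) with hGdef
  have hF_nonneg : ∀ z, 0 ≤ F z := fun z =>
    mul_nonneg (hg_nonneg z) (Real.rpow_nonneg (hρpos z).le _)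
  have hG_nonneg : ∀ z, 0 ≤ G z := fun z =>
    mul_nonneg (hρpos _).le (Real.rpow_nonneg (hρpos z).le _)
  have hF_meas : Measurable F := by
    apply hg_meas.mul
    fun_prop
  have hG_meas : Measurable G := by
    apply Measurable.mul
    · exact hρmeas.comp (measurable_add_const c)
    · fun_prop
  have hFG : ∀ z, g z * ρ (z + c) = F z * G z := by
    intro z
    have h1 : ρ z ^ (1 / α) * ρ z ^ (-(1 / α)) = 1 := by
      rw [← Real.rpow_add (hρpos z)]; norm_num
    calc g z * ρ (z + c) = g z * ρ (z + c) * (ρ z ^ (1 / α) * ρ z ^ (-(1 / α))) := by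
          rw [h1, mul_one]
      _ = F z * G z := by simp only [hFdef, hGdef]; ring
  have hFα : ∀ z, F z ^ α = g z ^ α * ρ z := by
    intro z
    simp only [hFdef]
    rw [Real.mul_rpow (hg_nonneg z) (Real.rpow_nonneg (hρpos z).le _),
      ← Real.rpow_mul (hρpos z).le, one_div_mul_cancel hα0.ne', Real.rpow_one]
  set Qc : ℝ := ∑ i, (2 / σ ^ 2) *
      ((c.1 i) ^ 2 / t - 3 * c.1 i * c.2 i / t ^ 2 + 3 * (c.2 i) ^ 2 / t ^ 3) with hQcdef
  have hβα : -(1 / α) * β = 1 - β := by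
    rw [hβdef]; field_simp; ring
  have hGβ : ∀ z, G z ^ β = Real.exp (β * (β - 1) * Qc) * ρ (z + β • c) := by
    intro z
    simp only [hGdef]
    rw [Real.mul_rpow (hρpos _).le (Real.rpow_nonneg (hρpos z).le _),
      ← Real.rpow_mul (hρpos z).le, hβα]
    exact WangHarnack.key_rpow hσ ht β c z
  -- integrability / Memℒp facts
  have hIgρ : Integrable (fun z => g z ^ α * ρ z) := by
    apply Integrable.bdd_mul hρint
    · apply Measurable.aestronglyMeasurable
      fun_prop
    · refine Filter.Eventually.of_forall (fun z => ?_)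
      rw [Real.norm_of_nonneg (Real.rpow_nonneg (hg_nonneg z) _)]
      exact Real.rpow_le_rpow (hg_nonneg z) (hg_bd z) hα0.le
  have hμ1 : (ENNReal.ofReal α) ≠ 0 := by
    simp only [ne_eq, ENNReal.ofReal_eq_zero, not_le]; exact hα0
  have hμ2 : (ENNReal.ofReal β) ≠ 0 := by
    simp only [ne_eq, ENNReal.ofReal_eq_zero, not_le]; exact hβ0
  have hFmem : MemLp F (ENNReal.ofReal α) := by
    have hiff := memLp_norm_rpow_iff (μ := (volume : Measure (Ed d × Ed d))) (p := ENNReal.ofReal α) (q := ENNReal.ofReal α)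
      hF_meas.aestronglyMeasurable hμ1 ENNReal.ofReal_ne_top
    rw [ENNReal.div_self hμ1 ENNReal.ofReal_ne_top, ENNReal.toReal_ofReal hα0.le] at hiff
    refine hiff.mp ?_
    rw [memLp_one_iff_integrable]
    have heq : (fun x => ‖F x‖ ^ α) = fun z => g z ^ α * ρ z := by
      funext z; rw [Real.norm_of_nonneg (hF_nonneg z), hFα z]
    rw [heq]; exact hIgρ
  have hIGβ : Integrable (fun z => Real.exp (β * (β - 1) * Qc) * ρ (z + β • c)) :=
    (hρint.comp_add_right (β • c)).const_mul _
  have hGmem : MemLp G (ENNReal.ofReal β) := by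
    have hiff := memLp_norm_rpow_iff (μ := (volume : Measure (Ed d × Ed d))) (p := ENNReal.ofReal β) (q := ENNReal.ofReal β)
      hG_meas.aestronglyMeasurable hμ2 ENNReal.ofReal_ne_top
    rw [ENNReal.div_self hμ2 ENNReal.ofReal_ne_top, ENNReal.toReal_ofReal hβ0.le] at hiff
    refine hiff.mp ?_
    rw [memLp_one_iff_integrable]
    have heq : (fun x => ‖G x‖ ^ β) = fun z => Real.exp (β * (β - 1) * Qc) * ρ (z + β • c) := by
      funext z; rw [Real.norm_of_nonneg (hG_nonneg z), hGβ z]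
    rw [heq]; exact hIGβ
  -- Hölder
  have holder := integral_mul_le_Lp_mul_Lq_of_nonneg hpq
    (Filter.Eventually.of_forall hF_nonneg) (Filter.Eventually.of_forall hG_nonneg) hFmem hGmem
  have hIF : ∫ z, F z ^ α = ∫ z, g z ^ α * ρ z := by simp_rw [hFα]
  have hIG : ∫ z, G z ^ β = Real.exp (β * (β - 1) * Qc) := by
    simp_rw [hGβ]
    rw [integral_const_mul _, integral_add_right_eq_self ρ (β • c), hρdef,
      WangHarnack.integral_kolDensity hσ ht, mul_one]
  rw [hIF, hIG] at holder
  have hPeq : kolP d σ t f (p, ξ) = ∫ z, F z * G z := by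
    rw [stepA]; simp_rw [hFG]
  have hP_nonneg : 0 ≤ kolP d σ t f (p, ξ) := by
    rw [stepA]
    exact integral_nonneg fun z => mul_nonneg (hg_nonneg z) (hρpos _).le
  have hI_nonneg : 0 ≤ ∫ z, g z ^ α * ρ z :=
    integral_nonneg fun z => mul_nonneg (Real.rpow_nonneg (hg_nonneg z) _) (hρpos z).le
  have main : kolP d σ t f (p, ξ) ^ α ≤
      ((∫ z, g z ^ α * ρ z) ^ (1 / α) * (Real.exp (β * (β - 1) * Qc)) ^ (1 / β)) ^ α :=
    Real.rpow_le_rpow hP_nonneg (by rw [hPeq]; exact holder) hα0.le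
  have hRHS : ((∫ z, g z ^ α * ρ z) ^ (1 / α) * (Real.exp (β * (β - 1) * Qc)) ^ (1 / β)) ^ α
      = Real.exp (β * Qc) * ∫ z, g z ^ α * ρ z := by
    rw [Real.mul_rpow (Real.rpow_nonneg hI_nonneg _) (Real.rpow_nonneg (Real.exp_nonneg _) _),
      ← Real.rpow_mul hI_nonneg, one_div_mul_cancel hα0.ne', Real.rpow_one,
      ← Real.exp_mul, ← Real.exp_mul, mul_comm]
    congr 2
    rw [hβdef]
    field_simp
    ring
  have hkolPα : kolP d σ t (fun x => f x ^ α) (p', ξ') = ∫ z, g z ^ α * ρ z := by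
    unfold kolP; rw [if_neg ht']
  have hQc_eq : Qc =
      6 / (σ ^ 2 * t ^ 3) * ∑ i : Fin d, (t / 2 * (p' i - p i) + (ξ' i - ξ i)) ^ 2
        + 1 / (2 * σ ^ 2 * t) * ∑ i : Fin d, (p' i - p i) ^ 2 := by
    rw [hQcdef, Finset.mul_sum, Finset.mul_sum, ← Finset.sum_add_distrib]
    refine Finset.sum_congr rfl fun i _ => ?_
    have ha : c.1 i = p' i - p i := by
      rw [hcdef]; simp [hadef, PiLp.sub_apply]
    have hb : c.2 i = ξ' i - ξ i + t * (p' i - p i) := by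
      rw [hcdef]
      simp [hbdef, PiLp.add_apply, PiLp.sub_apply, PiLp.smul_apply, smul_eq_mul]
    rw [ha, hb]
    field_simp
    ring
  calc kolP d σ t f (p, ξ) ^ α
      ≤ ((∫ z, g z ^ α * ρ z) ^ (1 / α) * (Real.exp (β * (β - 1) * Qc)) ^ (1 / β)) ^ α := main
    _ = Real.exp (β * Qc) * ∫ z, g z ^ α * ρ z := hRHS
    _ = Real.exp (β *
          (6 / (σ ^ 2 * t ^ 3) * ∑ i : Fin d, (t / 2 * (p' i - p i) + (ξ' i - ξ i)) ^ 2
            + 1 / (2 * σ ^ 2 * t) * ∑ i : Fin d, (p' i - p i) ^ 2)) *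
        kolP d σ t (fun x => f x ^ α) (p', ξ') := by rw [hQc_eq, hkolPα]
end
end
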